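/- Let k ≥ 1, r : Fin k → ℝ, let M ⊆ Fin k, and let ε : Fin k → ℝ with ε_i > 0 for all i. Over all strictly positive probability vectors π on Fin k, the conditional preference matching objective Σ_{i∈M} π_i·(r_i − log π_i) + Σ_{i∉M} π_i·(r_i − log(π_i/ε_i)) is uniquely maximized by π̂_i = w_i/Σ_j w_j, where w_i = exp(r_i) for i ∈ M and w_i = ε_i·exp(r_i) for i ∉ M. In particular, if M is nonempty, then for every i ∈ M the maximizer satisfies π̂_i/Σ_{j∈M} π̂_j = exp(r_i)/Σ_{j∈M} exp(r_j); that is, the optimal policy conditioned on M is the preference-matching softmax restricted to M. (This is Theorem 4 on conditional PM RLHF.) -/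

import Mathlib

/-- Theorem 4 on conditional PM RLHF: the conditional preference matching objective is
uniquely maximized by the reweighted softmax, and the optimal policy conditioned on the
regular set `M` is the preference-matching softmax restricted to `M`. -/
theorem conditional_preference_matching
    (k : ℕ) (hk : 1 ≤ k) (r : Fin k → ℝ) (M : Finset (Fin k))
    (ε : Fin k → ℝ) (hε : ∀ i, 0 < ε i)
    (w πhat : Fin k → ℝ)
    (hw : ∀ i, w i = if i ∈ M then Real.exp (r i) else ε i * Real.exp (r i))
    (hπhat : ∀ i, πhat i = w i / ∑ j, w j) :
    (∀ π : Fin k → ℝ, (∀ i, 0 < π i) → (∑ i, π i = 1) →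
      (∑ i ∈ M, π i * (r i - Real.log (π i))
          + ∑ i ∈ Mᶜ, π i * (r i - Real.log (π i / ε i))
        ≤ ∑ i ∈ M, πhat i * (r i - Real.log (πhat i))
          + ∑ i ∈ Mᶜ, πhat i * (r i - Real.log (πhat i / ε i))) ∧
      ((∑ i ∈ M, π i * (r i - Real.log (π i))
          + ∑ i ∈ Mᶜ, π i * (r i - Real.log (π i / ε i))
        = ∑ i ∈ M, πhat i * (r i - Real.log (πhat i))
          + ∑ i ∈ Mᶜ, πhat i * (r i - Real.log (πhat i / ε i))) ↔
        ∀ i, π i = πhat i)) ∧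
    (M.Nonempty → ∀ i ∈ M,
      πhat i / ∑ j ∈ M, πhat j = Real.exp (r i) / ∑ j ∈ M, Real.exp (r j)) := by
  haveI : NeZero k := ⟨by omega⟩
  have hwpos : ∀ i, 0 < w i := by
    intro i; rw [hw i]; split
    · exact Real.exp_pos _
    · exact mul_pos (hε i) (Real.exp_pos _)
  have hS : 0 < ∑ j, w j :=
    Finset.sum_pos (fun i _ => hwpos i) Finset.univ_nonempty
  set S := ∑ j, w j with hSdef
  have hπhatpos : ∀ i, 0 < πhat i := fun i => by
    rw [hπhat i]; exact div_pos (hwpos i) hS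
  have hπhatsum : ∑ i, πhat i = 1 := by
    simp only [hπhat]; rw [← Finset.sum_div]; exact div_self hS.ne'
  -- rewrite the objective as a single sum
  have key : ∀ π : Fin k → ℝ, (∀ i, 0 < π i) →
      ∑ i ∈ M, π i * (r i - Real.log (π i))
        + ∑ i ∈ Mᶜ, π i * (r i - Real.log (π i / ε i))
      = ∑ i, π i * (Real.log (w i) - Real.log (π i)) := by
    intro π hπ
    rw [← Finset.sum_add_sum_compl M (fun i => π i * (Real.log (w i) - Real.log (π i)))]
    congr 1
    · apply Finset.sum_congr rfl; intro i hi
      rw [hw i, if_pos hi, Real.log_exp]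
    · apply Finset.sum_congr rfl; intro i hi
      rw [Finset.mem_compl] at hi
      rw [hw i, if_neg hi, Real.log_mul (hε i).ne' (Real.exp_pos _).ne',
          Real.log_exp, Real.log_div (hπ i).ne' (hε i).ne']
      ring
  have hfπhat : ∑ i, πhat i * (Real.log (w i) - Real.log (πhat i)) = Real.log S := by
    have hterm : ∀ i ∈ Finset.univ,
        πhat i * (Real.log (w i) - Real.log (πhat i)) = πhat i * Real.log S := by
      intro i _
      rw [hπhat i, Real.log_div (hwpos i).ne' hS.ne']; ring
    rw [Finset.sum_congr rfl hterm, ← Finset.sum_mul, hπhatsum, one_mul]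
  have main : ∀ π : Fin k → ℝ, (∀ i, 0 < π i) → (∑ i, π i = 1) →
      (∑ i, π i * (Real.log (w i) - Real.log (π i)) ≤ Real.log S) ∧
      ((∑ i, π i * (Real.log (w i) - Real.log (π i)) = Real.log S) ↔
        ∀ i, π i = πhat i) := by
    intro π hπ hπs
    have hx : ∀ i, 0 < w i / (S * π i) := fun i =>
      div_pos (hwpos i) (mul_pos hS (hπ i))
    have hterm : ∀ i, π i * (Real.log (w i) - Real.log (π i)) - π i * Real.log S
        = π i * Real.log (w i / (S * π i)) := by
      intro i
      rw [Real.log_div (hwpos i).ne' (mul_pos hS (hπ i)).ne',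
          Real.log_mul hS.ne' (hπ i).ne']
      ring
    have hle : ∀ i, π i * (Real.log (w i) - Real.log (π i)) - π i * Real.log S
        ≤ w i / S - π i := by
      intro i
      rw [hterm i]
      have h1 : Real.log (w i / (S * π i)) ≤ w i / (S * π i) - 1 :=
        Real.log_le_sub_one_of_pos (hx i)
      calc π i * Real.log (w i / (S * π i))
          ≤ π i * (w i / (S * π i) - 1) := by
            exact mul_le_mul_of_nonneg_left h1 (hπ i).le
        _ = w i / S - π i := by
            field_simp [(hπ i).ne', hS.ne']
    have hlt : ∀ i, π i ≠ πhat i →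
        π i * (Real.log (w i) - Real.log (π i)) - π i * Real.log S
        < w i / S - π i := by
      intro i hne
      rw [hterm i]
      have hxne : w i / (S * π i) ≠ 1 := by
        intro h
        apply hne
        rw [hπhat i]
        have := (div_eq_one_iff_eq (mul_pos hS (hπ i)).ne').mp h
        field_simp [this]
        linarith
      have h1 : Real.log (w i / (S * π i)) < w i / (S * π i) - 1 :=
        Real.log_lt_sub_one_of_pos (hx i) hxne
      calc π i * Real.log (w i / (S * π i))
          < π i * (w i / (S * π i) - 1) := by
            exact (mul_lt_mul_iff_right₀ (hπ i)).mpr h1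
        _ = w i / S - π i := by
            field_simp [(hπ i).ne', hS.ne']
    have hsumbound : ∑ i, (w i / S - π i) = 0 := by
      rw [Finset.sum_sub_distrib, ← Finset.sum_div, hπs, ← hSdef, div_self hS.ne']
      ring
    have hineq : ∑ i, π i * (Real.log (w i) - Real.log (π i)) ≤ Real.log S := by
      have : ∑ i, (π i * (Real.log (w i) - Real.log (π i)) - π i * Real.log S) ≤ 0 := by
        calc ∑ i, (π i * (Real.log (w i) - Real.log (π i)) - π i * Real.log S)
            ≤ ∑ i, (w i / S - π i) := Finset.sum_le_sum (fun i _ => hle i)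
          _ = 0 := hsumbound
      have h2 : ∑ i, (π i * (Real.log (w i) - Real.log (π i)) - π i * Real.log S)
          = (∑ i, π i * (Real.log (w i) - Real.log (π i))) - Real.log S := by
        rw [Finset.sum_sub_distrib, ← Finset.sum_mul, hπs, one_mul]
      linarith [h2 ▸ this]
    refine ⟨hineq, ?_, ?_⟩
    · intro heq
      by_contra hcon
      push_neg at hcon
      obtain ⟨i0, hi0⟩ := hcon
      have hstrict : ∑ i, (π i * (Real.log (w i) - Real.log (π i)) - π i * Real.log S)
          < ∑ i, (w i / S - π i) :=
        Finset.sum_lt_sum (fun i _ => hle i) ⟨i0, Finset.mem_univ i0, hlt i0 hi0⟩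
      rw [hsumbound, Finset.sum_sub_distrib, ← Finset.sum_mul, hπs, one_mul, heq] at hstrict
      linarith
    · intro h
      have : π = πhat := funext h
      rw [this]
      exact hfπhat
  constructor
  · intro π hπpos hπsum
    have hmπ := main π hπpos hπsum
    rw [key π hπpos, key πhat hπhatpos, hfπhat]
    exact hmπ
  · intro hM i hi
    have hE : 0 < ∑ j ∈ M, Real.exp (r j) :=
      Finset.sum_pos (fun j _ => Real.exp_pos _) hM
    have hπi : πhat i = Real.exp (r i) / S := by rw [hπhat i, hw i, if_pos hi]
    have hMsum : ∑ j ∈ M, πhat j = (∑ j ∈ M, Real.exp (r j)) / S := by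
      rw [Finset.sum_div]
      exact Finset.sum_congr rfl fun j hj => by rw [hπhat j, hw j, if_pos hj]
    rw [hπi, hMsum]
    field_simp
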